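/- Let n = 2 and define Q(z,χ,τ) := τ + 2i·z₁χ₁ and Q′(z,χ,τ) := τ + 2i·(z₁χ₁ + z₂χ₂) on ℂ² × ℂ² × ℂ. Then Q and Q′ are real normal defining functions of dimension 2; Q is not holomorphically nondegenerate at 0, while Q′ is finitely nondegenerate at 0. The quadruple f(z,w) := (z₁², 2z₁), g(z,w) := w², f̃(χ,τ) := (2iχ₁², χ₁τ), g̃(χ,τ) := τ² is an HSPM sending (ℳ,0) into (ℳ′,0) which is not transversally null (g ≢ 0), yet det(∂f/∂z(z,w)) ≡ 0 and det(∂f̃/∂χ(χ,τ)) ≡ 0 identically, the Jacobian determinants of (f,g) and of (f̃,g̃) vanish identically, and ∂g/∂w(0,0) = 0. -/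

import Mathlib

open Filter Topology Complex

namespace HSPMpaper

variable {n : ℕ}

/-- Partial derivative of `F` in the `i`-th coordinate direction. -/
noncomputable def pd (i : Fin n) (F : (Fin n → ℂ) → ℂ) : (Fin n → ℂ) → ℂ :=
  fun z => fderiv ℂ F z (Pi.single i 1)

/-- Iterated partial derivative `∂^α` for a multi-index `α`. -/
noncomputable def mpd (α : Fin n → ℕ) (F : (Fin n → ℂ) → ℂ) : (Fin n → ℂ) → ℂ :=
  ((List.ofFn fun i : Fin n => (pd i)^[α i]).foldr (· ∘ ·) id) F

/-- Componentwise complex conjugation on `ℂⁿ`. -/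
def conjV (z : Fin n → ℂ) : Fin n → ℂ := fun i => starRingEnd ℂ (z i)

/-- The conjugate defining function `Q̄(χ,z,τ) = conj (Q (conj χ) (conj z) (conj τ))`. -/
def QBar (Q : (Fin n → ℂ) → (Fin n → ℂ) → ℂ → ℂ) : (Fin n → ℂ) → (Fin n → ℂ) → ℂ → ℂ :=
  fun χ z τ => starRingEnd ℂ (Q (conjV χ) (conjV z) (starRingEnd ℂ τ))

/-- `Q` is a normal defining function (of dimension `n`): holomorphic near the origin of
`ℂⁿ × ℂⁿ × ℂ` and satisfying `Q(0,χ,τ) = τ` and `Q(z,0,τ) = τ` near `0`. -/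
def IsNormalDF (Q : (Fin n → ℂ) → (Fin n → ℂ) → ℂ → ℂ) : Prop :=
  (∀ᶠ p in 𝓝 (0 : (Fin n → ℂ) × (Fin n → ℂ) × ℂ),
      AnalyticAt ℂ (fun q : (Fin n → ℂ) × (Fin n → ℂ) × ℂ => Q q.1 q.2.1 q.2.2) p) ∧
  (∀ᶠ p in 𝓝 (0 : (Fin n → ℂ) × (Fin n → ℂ) × ℂ),
      Q 0 p.2.1 p.2.2 = p.2.2 ∧ Q p.1 0 p.2.2 = p.2.2)

/-- `Q` is a real normal defining function: normal and `Q(z,χ,Q̄(χ,z,w)) = w` near `0`. -/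
def IsRealNormalDF (Q : (Fin n → ℂ) → (Fin n → ℂ) → ℂ → ℂ) : Prop :=
  IsNormalDF Q ∧
  ∀ᶠ p in 𝓝 (0 : (Fin n → ℂ) × (Fin n → ℂ) × ℂ),
    Q p.1 p.2.1 (QBar Q p.2.1 p.1 p.2.2) = p.2.2

/-- `(f,g,f̃,g̃)` is a holomorphic Segre preserving map sending `(ℳ,0)` into `(ℳ',0)`. -/
def IsHSPM (Q Q' : (Fin n → ℂ) → (Fin n → ℂ) → ℂ → ℂ)
    (f : (Fin n → ℂ) → ℂ → Fin n → ℂ) (g : (Fin n → ℂ) → ℂ → ℂ)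
    (ft : (Fin n → ℂ) → ℂ → Fin n → ℂ) (gt : (Fin n → ℂ) → ℂ → ℂ) : Prop :=
  (∀ᶠ p in 𝓝 (0 : (Fin n → ℂ) × ℂ), AnalyticAt ℂ (fun q : (Fin n → ℂ) × ℂ => f q.1 q.2) p) ∧
  (∀ᶠ p in 𝓝 (0 : (Fin n → ℂ) × ℂ), AnalyticAt ℂ (fun q : (Fin n → ℂ) × ℂ => g q.1 q.2) p) ∧
  (∀ᶠ p in 𝓝 (0 : (Fin n → ℂ) × ℂ), AnalyticAt ℂ (fun q : (Fin n → ℂ) × ℂ => ft q.1 q.2) p) ∧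
  (∀ᶠ p in 𝓝 (0 : (Fin n → ℂ) × ℂ), AnalyticAt ℂ (fun q : (Fin n → ℂ) × ℂ => gt q.1 q.2) p) ∧
  f 0 0 = 0 ∧ g 0 0 = 0 ∧ ft 0 0 = 0 ∧ gt 0 0 = 0 ∧
  ∀ᶠ p in 𝓝 (0 : (Fin n → ℂ) × (Fin n → ℂ) × ℂ),
    g p.1 (Q p.1 p.2.1 p.2.2) =
      Q' (f p.1 (Q p.1 p.2.1 p.2.2)) (ft p.2.1 p.2.2) (gt p.2.1 p.2.2)

/-- `M` is of finite type at `0`: `(z,χ) ↦ Q(z,χ,0)` does not vanish identically near `0`. -/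
def FiniteType (Q : (Fin n → ℂ) → (Fin n → ℂ) → ℂ → ℂ) : Prop :=
  ¬ ∀ᶠ p in 𝓝 (0 : (Fin n → ℂ) × (Fin n → ℂ)), Q p.1 p.2 0 = 0

/-- Jacobian matrix of `z ↦ f(z,0)` at `z`. -/
noncomputable def jacz (f : (Fin n → ℂ) → ℂ → Fin n → ℂ) (z : Fin n → ℂ) :
    Matrix (Fin n) (Fin n) ℂ :=
  Matrix.of fun i j => pd j (fun z' => f z' 0 i) z

/-- `ℋ` is Segre transversal to `ℳ'` at `0`: `∂g/∂w(0,0) ≠ 0`. -/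
noncomputable def SegreTransversal (g : (Fin n → ℂ) → ℂ → ℂ) : Prop :=
  deriv (fun w => g 0 w) 0 ≠ 0

/-- `ℋ` is totally Segre nondegenerate at `0`. -/
def TotallySegreNondeg (f ft : (Fin n → ℂ) → ℂ → Fin n → ℂ) : Prop :=
  (¬ ∀ᶠ z in 𝓝 (0 : Fin n → ℂ), (jacz f z).det = 0) ∧
  (¬ ∀ᶠ χ in 𝓝 (0 : Fin n → ℂ), (jacz ft χ).det = 0)

/-- `ℋ` is transversally null: `g ≡ 0` and `g̃ ≡ 0` near `0`. -/
def TransversallyNull (g gt : (Fin n → ℂ) → ℂ → ℂ) : Prop :=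
  (∀ᶠ p in 𝓝 (0 : (Fin n → ℂ) × ℂ), g p.1 p.2 = 0) ∧
  (∀ᶠ p in 𝓝 (0 : (Fin n → ℂ) × ℂ), gt p.1 p.2 = 0)

/-- The `k`-th coordinate direction in `ℂⁿ × ℂ`. -/
noncomputable def dirCT (n : ℕ) (k : Fin (n + 1)) : (Fin n → ℂ) × ℂ :=
  if h : (k : ℕ) < n then (Pi.single ⟨k, h⟩ 1, 0) else (0, 1)

/-- `M` is holomorphically nondegenerate at `0`: for some `K`, the map
`(χ,τ) ↦ (∂_z^α Q(0,χ,τ))_{|α| ≤ K}` has generic rank `n+1`. -/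
def HolNondeg (Q : (Fin n → ℂ) → (Fin n → ℂ) → ℂ → ℂ) : Prop :=
  ∃ K : ℕ, ∃ A : Fin (n + 1) → Fin n → ℕ, (∀ j, (∑ i, A j i) ≤ K) ∧
    ¬ ∀ᶠ p in 𝓝 (0 : (Fin n → ℂ) × ℂ),
      (Matrix.of fun j k : Fin (n + 1) =>
        fderiv ℂ (fun q : (Fin n → ℂ) × ℂ => mpd (A j) (fun z => Q z q.1 q.2) 0) p
          (dirCT n k)).det = 0

/-- `M` is of class `𝒞` at `0`: for some `K`, the map
`χ ↦ (∂_z^α Q(0,χ,0))_{|α| ≤ K}` has generic rank `n`. -/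
def ClassC (Q : (Fin n → ℂ) → (Fin n → ℂ) → ℂ → ℂ) : Prop :=
  ∃ K : ℕ, ∃ A : Fin n → Fin n → ℕ, (∀ j, (∑ i, A j i) ≤ K) ∧
    ¬ ∀ᶠ χ in 𝓝 (0 : Fin n → ℂ),
      (Matrix.of fun j k : Fin n =>
        pd k (fun χ' => mpd (A j) (fun z => Q z χ' 0) 0) χ).det = 0

/-- `M` is finitely nondegenerate at `0`: for some `K`, the vectors
`∂_χ ∂_z^α Q(0,0,0)`, `|α| ≤ K`, span `ℂⁿ`. -/
def FinNondeg (Q : (Fin n → ℂ) → (Fin n → ℂ) → ℂ → ℂ) : Prop :=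
  ∃ K : ℕ, Submodule.span ℂ
    {v : Fin n → ℂ | ∃ α : Fin n → ℕ, (∑ i, α i) ≤ K ∧
      v = fun i => pd i (fun χ => mpd α (fun z => Q z χ 0) 0) 0} = ⊤

/-- Full Jacobian matrix of `(z,w) ↦ (f(z,w), g(z,w))` at `p ∈ ℂⁿ × ℂ`. -/
noncomputable def jacFull (f : (Fin n → ℂ) → ℂ → Fin n → ℂ) (g : (Fin n → ℂ) → ℂ → ℂ)
    (p : (Fin n → ℂ) × ℂ) : Matrix (Fin (n + 1)) (Fin (n + 1)) ℂ :=
  Matrix.of fun i k =>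
    fderiv ℂ (fun q : (Fin n → ℂ) × ℂ => (Fin.snoc (f q.1 q.2) (g q.1 q.2) : Fin (n + 1) → ℂ) i) p (dirCT n k)

/-- The degree-`d` homogeneous term of the Taylor series of `φ` at `0`. -/
noncomputable def homogTerm (d : ℕ) (φ : (Fin n → ℂ) → ℂ) : (Fin n → ℂ) → ℂ :=
  fun z => iteratedFDeriv ℂ d φ 0 (fun _ => z) / (d.factorial : ℂ)

/-- The order of vanishing of `φ` at `0`. -/
noncomputable def vanishOrder (φ : (Fin n → ℂ) → ℂ) : ℕ :=
  sInf {d | homogTerm d φ ≠ 0}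


-- ===== auxiliary lemmas =====

section Aux

lemma key {E E' : Type*} [NormedAddCommGroup E] [NormedSpace ℂ E]
    [NormedAddCommGroup E'] [NormedSpace ℂ E']
    (φ : E' → ℂ) (L : E →L[ℂ] E') (p v : E) (h : DifferentiableAt ℂ φ (L p)) (hv : L v = 0) :
    fderiv ℂ (fun x => φ (L x)) p v = 0 := by
  have h2 : fderiv ℂ (φ ∘ (L : E → E')) p = (fderiv ℂ φ (L p)).comp (fderiv ℂ (L : E → E') p) :=
    fderiv_comp p h L.differentiableAt
  show fderiv ℂ (φ ∘ (L : E → E')) p v = 0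
  rw [h2, ContinuousLinearMap.comp_apply, L.fderiv, hv, map_zero]

lemma mpd_two (α : Fin 2 → ℕ) (F : (Fin 2 → ℂ) → ℂ) :
    mpd α F = (pd 0)^[α 0] ((pd 1)^[α 1] F) := rfl

lemma pd_const (j : Fin 2) (c : ℂ) : pd j (fun _ => c) = fun _ => 0 := by
  funext z; simp [pd]

lemma pdIter_zero (j : Fin 2) (m : ℕ) : (pd j)^[m] (fun _ => (0:ℂ)) = fun _ => 0 := by
  induction m with
  | zero => rfl
  | succ m ih => rw [Function.iterate_succ_apply, pd_const, ih]

lemma pdIter_const (j : Fin 2) (m : ℕ) (c : ℂ) :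
    (pd j)^[m + 1] (fun _ => c) = fun _ => 0 := by
  rw [Function.iterate_succ_apply, pd_const, pdIter_zero]

lemma pd_affine2 (j : Fin 2) (c a b : ℂ) :
    pd j (fun z : Fin 2 → ℂ => c + a * z 0 + b * z 1)
      = fun _ => a * (Pi.single j 1 : Fin 2 → ℂ) 0 + b * (Pi.single j 1 : Fin 2 → ℂ) 1 := by
  funext z
  have h0 : HasFDerivAt (fun z : Fin 2 → ℂ => a * z 0)
      (a • (ContinuousLinearMap.proj 0 : (Fin 2 → ℂ) →L[ℂ] ℂ)) z :=
    (hasFDerivAt_apply (0 : Fin 2) z).const_mul a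
  have h1 : HasFDerivAt (fun z : Fin 2 → ℂ => b * z 1)
      (b • (ContinuousLinearMap.proj 1 : (Fin 2 → ℂ) →L[ℂ] ℂ)) z :=
    (hasFDerivAt_apply (1 : Fin 2) z).const_mul b
  have h : HasFDerivAt (fun z : Fin 2 → ℂ => c + a * z 0 + b * z 1) _ z := ((hasFDerivAt_const c z).add h0).add h1
  rw [pd, h.fderiv]
  simp

lemma pd_affine1 (j : Fin 2) (c a : ℂ) :
    pd j (fun z : Fin 2 → ℂ => c + a * z 0) = fun _ => a * (Pi.single j 1 : Fin 2 → ℂ) 0 := by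
  funext z
  have h0 : HasFDerivAt (fun z : Fin 2 → ℂ => a * z 0)
      (a • (ContinuousLinearMap.proj 0 : (Fin 2 → ℂ) →L[ℂ] ℂ)) z :=
    (hasFDerivAt_apply (0 : Fin 2) z).const_mul a
  have h : HasFDerivAt (fun z : Fin 2 → ℂ => c + a * z 0) _ z := (hasFDerivAt_const c z).add h0
  rw [pd, h.fderiv]
  simp

lemma pd_lin1 (j : Fin 2) (a : ℂ) :
    pd j (fun z : Fin 2 → ℂ => a * z 0) = fun _ => a * (Pi.single j 1 : Fin 2 → ℂ) 0 := by
  funext z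
  have h0 : HasFDerivAt (fun z : Fin 2 → ℂ => a * z 0)
      (a • (ContinuousLinearMap.proj 0 : (Fin 2 → ℂ) →L[ℂ] ℂ)) z :=
    (hasFDerivAt_apply (0 : Fin 2) z).const_mul a
  rw [pd, h0.fderiv]
  simp

lemma pd1_affine1 (c a : ℂ) :
    pd 1 (fun z : Fin 2 → ℂ => c + a * z 0) = fun _ => 0 := by
  rw [pd_affine1]; funext z; simp

lemma pd0_affine1 (c a : ℂ) :
    pd 0 (fun z : Fin 2 → ℂ => c + a * z 0) = fun _ => a := by
  rw [pd_affine1]; funext z; simp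

lemma mpd_Q_form (α : Fin 2 → ℕ) : ∃ a b : ℂ, ∀ (χ : Fin 2 → ℂ) (τ : ℂ),
    mpd α (fun z => τ + 2 * Complex.I * (z 0 * χ 0)) 0 = a * τ + b * χ 0 := by
  have hrw : ∀ (χ : Fin 2 → ℂ) (τ : ℂ), (fun z : Fin 2 → ℂ => τ + 2 * Complex.I * (z 0 * χ 0))
      = fun z : Fin 2 → ℂ => τ + (2 * Complex.I * χ 0) * z 0 := by
    intro χ τ; funext z; ring
  cases h1 : α 1 with
  | succ m =>
    refine ⟨0, 0, fun χ τ => ?_⟩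
    rw [mpd_two, h1, hrw, Function.iterate_succ_apply, pd1_affine1, pdIter_zero, pdIter_zero]
    simp
  | zero =>
    cases h0 : α 0 with
    | zero =>
      refine ⟨1, 0, fun χ τ => ?_⟩
      rw [mpd_two, h1, h0]
      simp
    | succ m =>
      cases m with
      | zero =>
        refine ⟨0, 2 * Complex.I, fun χ τ => ?_⟩
        rw [mpd_two, h1, h0, hrw]
        simp only [Function.iterate_zero, id_eq]
        rw [Function.iterate_succ_apply, pd0_affine1]
        simp only [Function.iterate_zero, id_eq]
        ring
      | succ k =>
        refine ⟨0, 0, fun χ τ => ?_⟩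
        rw [mpd_two, h1, h0, hrw]
        simp only [Function.iterate_zero, id_eq]
        rw [Function.iterate_succ_apply, pd0_affine1, pdIter_const]
        simp

/-- the linear projection `q ↦ (q.1 0, q.2)` -/
noncomputable def pi2 : ((Fin 2 → ℂ) × ℂ) →L[ℂ] ℂ × ℂ :=
  ((ContinuousLinearMap.proj 0).comp (ContinuousLinearMap.fst ℂ (Fin 2 → ℂ) ℂ)).prod
    (ContinuousLinearMap.snd ℂ (Fin 2 → ℂ) ℂ)

lemma key2 (φ : ℂ × ℂ → ℂ) (hφ : Differentiable ℂ φ) (p : (Fin 2 → ℂ) × ℂ) :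
    fderiv ℂ (fun q : (Fin 2 → ℂ) × ℂ => φ (q.1 0, q.2)) p ((Pi.single 1 1 : Fin 2 → ℂ), 0) = 0 := by
  have h : (fun q : (Fin 2 → ℂ) × ℂ => φ (q.1 0, q.2)) = fun q => φ (pi2 q) := rfl
  rw [h]
  refine key φ pi2 p _ (hφ _) ?_
  simp [pi2, Prod.ext_iff]

lemma pd1_key (φ : ℂ → ℂ) (hφ : Differentiable ℂ φ) (z : Fin 2 → ℂ) :
    pd 1 (fun z' : Fin 2 → ℂ => φ (z' 0)) z = 0 := by
  rw [pd]
  refine key φ (ContinuousLinearMap.proj 0) z (Pi.single 1 1) (hφ _) ?_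
  simp

lemma dirCT21 : dirCT 2 1 = ((Pi.single 1 1 : Fin 2 → ℂ), (0:ℂ)) := by
  simp [dirCT]

lemma aproj1 (i : Fin 2) (p : (Fin 2 → ℂ) × ℂ) :
    AnalyticAt ℂ (fun q : (Fin 2 → ℂ) × ℂ => q.1 i) p :=
  ((ContinuousLinearMap.proj (R := ℂ) (φ := fun _ : Fin 2 => ℂ) i).analyticAt p.1).comp
    analyticAt_fst

end Aux

section Main

local notation "Qe" => (fun z χ τ => τ + 2 * Complex.I * (z 0 * χ 0) :
  (Fin 2 → ℂ) → (Fin 2 → ℂ) → ℂ → ℂ)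
local notation "Qe'" => (fun z χ τ => τ + 2 * Complex.I * (z 0 * χ 0 + z 1 * χ 1) :
  (Fin 2 → ℂ) → (Fin 2 → ℂ) → ℂ → ℂ)
local notation "fe" => (fun z _ => ![z 0 ^ 2, 2 * z 0] : (Fin 2 → ℂ) → ℂ → Fin 2 → ℂ)
local notation "ge" => (fun _ w => w ^ 2 : (Fin 2 → ℂ) → ℂ → ℂ)
local notation "fte" => (fun χ τ => ![2 * Complex.I * χ 0 ^ 2, χ 0 * τ] :
  (Fin 2 → ℂ) → ℂ → Fin 2 → ℂ)
local notation "gte" => (fun _ τ => τ ^ 2 : (Fin 2 → ℂ) → ℂ → ℂ)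

lemma lem1 : IsRealNormalDF Qe := by
  refine ⟨⟨Filter.Eventually.of_forall fun p => ?_, Filter.Eventually.of_forall fun p => ?_⟩,
    Filter.Eventually.of_forall fun p => ?_⟩
  · exact (analyticAt_snd.comp analyticAt_snd).add
      (analyticAt_const.mul
        ((((ContinuousLinearMap.proj (R := ℂ) (φ := fun _ : Fin 2 => ℂ) 0).analyticAt
            _).comp analyticAt_fst).mul
          (((ContinuousLinearMap.proj (R := ℂ) (φ := fun _ : Fin 2 => ℂ) 0).analyticAt
            _).comp (analyticAt_fst.comp analyticAt_snd))))
  · constructor <;> simp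
  · simp only [QBar, conjV, map_add, map_mul, Complex.conj_conj, Complex.conj_I, map_ofNat]
    ring
lemma lem2 : IsRealNormalDF Qe' := by
  refine ⟨⟨Filter.Eventually.of_forall fun p => ?_, Filter.Eventually.of_forall fun p => ?_⟩,
    Filter.Eventually.of_forall fun p => ?_⟩
  · refine (analyticAt_snd.comp analyticAt_snd).add (analyticAt_const.mul (AnalyticAt.add ?_ ?_))
    · exact (((ContinuousLinearMap.proj (R := ℂ) (φ := fun _ : Fin 2 => ℂ) 0).analyticAt
          _).comp analyticAt_fst).mul
        (((ContinuousLinearMap.proj (R := ℂ) (φ := fun _ : Fin 2 => ℂ) 0).analyticAt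
          _).comp (analyticAt_fst.comp analyticAt_snd))
    · exact (((ContinuousLinearMap.proj (R := ℂ) (φ := fun _ : Fin 2 => ℂ) 1).analyticAt
          _).comp analyticAt_fst).mul
        (((ContinuousLinearMap.proj (R := ℂ) (φ := fun _ : Fin 2 => ℂ) 1).analyticAt
          _).comp (analyticAt_fst.comp analyticAt_snd))
  · constructor <;> simp
  · simp only [QBar, conjV, map_add, map_mul, Complex.conj_conj, Complex.conj_I, map_ofNat]
    ring

lemma lem3 : ¬ HolNondeg Qe := by
  rintro ⟨K, A, -, hA⟩
  apply hA
  refine Filter.Eventually.of_forall fun p => ?_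
  apply Matrix.det_eq_zero_of_column_eq_zero 1
  intro j
  show fderiv ℂ (fun q : (Fin 2 → ℂ) × ℂ =>
      mpd (A j) (fun z => q.2 + 2 * Complex.I * (z 0 * q.1 0)) 0) p (dirCT 2 1) = 0
  obtain ⟨a, b, hab⟩ := mpd_Q_form (A j)
  have h : (fun q : (Fin 2 → ℂ) × ℂ =>
      mpd (A j) (fun z => q.2 + 2 * Complex.I * (z 0 * q.1 0)) 0)
      = fun q : (Fin 2 → ℂ) × ℂ => a * q.2 + b * q.1 0 := funext fun q => hab q.1 q.2
  rw [h, dirCT21]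
  exact key2 (fun xy => a * xy.2 + b * xy.1) (by fun_prop) p

lemma lem4 : FinNondeg Qe' := by
  refine ⟨1, ?_⟩
  have hval : ∀ c : Fin 2, (fun i : Fin 2 =>
      pd i (fun χ => mpd (Pi.single c 1) (fun z => Qe' z χ 0) 0) 0)
      = (2 * Complex.I) • (Pi.single c 1 : Fin 2 → ℂ) := by
    intro c
    have hin : ∀ χ : Fin 2 → ℂ, (fun z : Fin 2 → ℂ => (0:ℂ) + 2 * Complex.I * (z 0 * χ 0 + z 1 * χ 1))
        = fun z : Fin 2 → ℂ => (0:ℂ) + (2 * Complex.I * χ 0) * z 0 + (2 * Complex.I * χ 1) * z 1 := by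
      intro χ; funext z; ring
    fin_cases c
    · show (fun i : Fin 2 => pd i (fun χ => mpd (Pi.single (0:Fin 2) 1) (fun z => Qe' z χ 0) 0) 0)
        = (2 * Complex.I) • (Pi.single (0:Fin 2) 1 : Fin 2 → ℂ)
      have h1 : (fun χ : Fin 2 → ℂ =>
          mpd (Pi.single (0 : Fin 2) 1) (fun z => Qe' z χ 0) 0) = fun χ => 2 * Complex.I * χ 0 := by
        funext χ
        show mpd (Pi.single (0:Fin 2) 1) (fun z => (0:ℂ) + 2 * Complex.I * (z 0 * χ 0 + z 1 * χ 1)) 0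
          = 2 * Complex.I * χ 0
        rw [mpd_two]
        simp only [Pi.single_eq_same, Pi.single_eq_of_ne (by decide : (1:Fin 2) ≠ 0),
          Function.iterate_zero, id_eq]
        rw [hin, Function.iterate_succ_apply, pd_affine2]
        simp
      rw [h1]
      funext i
      rw [show (fun χ : Fin 2 → ℂ => 2 * Complex.I * χ 0) = fun χ : Fin 2 → ℂ => (2 * Complex.I) * χ 0 from rfl,
        pd_lin1]
      fin_cases i <;> simp
    · show (fun i : Fin 2 => pd i (fun χ => mpd (Pi.single (1:Fin 2) 1) (fun z => Qe' z χ 0) 0) 0)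
        = (2 * Complex.I) • (Pi.single (1:Fin 2) 1 : Fin 2 → ℂ)
      have h1 : (fun χ : Fin 2 → ℂ =>
          mpd (Pi.single (1 : Fin 2) 1) (fun z => Qe' z χ 0) 0) = fun χ => 2 * Complex.I * χ 1 := by
        funext χ
        show mpd (Pi.single (1:Fin 2) 1) (fun z => (0:ℂ) + 2 * Complex.I * (z 0 * χ 0 + z 1 * χ 1)) 0
          = 2 * Complex.I * χ 1
        rw [mpd_two]
        simp only [Pi.single_eq_same, Pi.single_eq_of_ne (by decide : (0:Fin 2) ≠ 1),
          Function.iterate_zero, id_eq]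
        rw [hin, Function.iterate_succ_apply]
        rw [pd_affine2]
        have : (fun _ : Fin 2 → ℂ => 2 * Complex.I * χ 0 * (Pi.single (1:Fin 2) 1 : Fin 2 → ℂ) 0
            + 2 * Complex.I * χ 1 * (Pi.single (1:Fin 2) 1 : Fin 2 → ℂ) 1)
            = fun _ : Fin 2 → ℂ => 2 * Complex.I * χ 1 := by
          funext z; simp
        rw [this]
        simp only [Function.iterate_zero, id_eq]
      rw [h1]
      funext i
      have hl : (fun χ : Fin 2 → ℂ => 2 * Complex.I * χ 1)
          = fun χ : Fin 2 → ℂ => (0:ℂ) + (0:ℂ) * χ 0 + (2 * Complex.I) * χ 1 := by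
        funext χ; ring
      rw [hl, pd_affine2]
      fin_cases i <;> simp
  rw [eq_top_iff]
  rintro x -
  have hmem : ∀ c : Fin 2, ((2 * Complex.I) • (Pi.single c 1 : Fin 2 → ℂ)) ∈
      Submodule.span ℂ {v : Fin 2 → ℂ | ∃ α : Fin 2 → ℕ, (∑ i, α i) ≤ 1 ∧
        v = fun i => pd i (fun χ => mpd α (fun z => Qe' z χ 0) 0) 0} := by
    intro c
    apply Submodule.subset_span
    exact ⟨Pi.single c 1, by fin_cases c <;> simp [Fin.sum_univ_two], (hval c).symm⟩
  have hsingle : ∀ c : Fin 2, (Pi.single c 1 : Fin 2 → ℂ) ∈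
      Submodule.span ℂ {v : Fin 2 → ℂ | ∃ α : Fin 2 → ℕ, (∑ i, α i) ≤ 1 ∧
        v = fun i => pd i (fun χ => mpd α (fun z => Qe' z χ 0) 0) 0} := by
    intro c
    have := Submodule.smul_mem _ ((2 * Complex.I)⁻¹) (hmem c)
    rwa [smul_smul, inv_mul_cancel₀ (by simp [Complex.I_ne_zero]), one_smul] at this
  have hx : x = x 0 • (Pi.single (0:Fin 2) 1 : Fin 2 → ℂ) + x 1 • (Pi.single (1:Fin 2) 1 : Fin 2 → ℂ) := by
    funext i; fin_cases i <;> simp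
  rw [hx]
  exact Submodule.add_mem _ (Submodule.smul_mem _ _ (hsingle 0)) (Submodule.smul_mem _ _ (hsingle 1))

lemma lem5 : IsHSPM Qe Qe' fe ge fte gte := by
  refine ⟨Filter.Eventually.of_forall fun p => ?_, Filter.Eventually.of_forall fun p => ?_,
    Filter.Eventually.of_forall fun p => ?_, Filter.Eventually.of_forall fun p => ?_,
    ?_, ?_, ?_, ?_, Filter.Eventually.of_forall fun p => ?_⟩
  · apply AnalyticAt.pi
    intro i
    fin_cases i
    · exact (aproj1 0 p).pow 2
    · exact analyticAt_const.mul (aproj1 0 p)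
  · exact analyticAt_snd.pow 2
  · apply AnalyticAt.pi
    intro i
    fin_cases i
    · exact analyticAt_const.mul ((aproj1 0 p).pow 2)
    · exact (aproj1 0 p).mul analyticAt_snd
  · exact analyticAt_snd.pow 2
  · funext i; fin_cases i <;> simp
  · simp
  · funext i; fin_cases i <;> simp
  · simp
  · show (p.2.2 + 2 * Complex.I * (p.1 0 * p.2.1 0)) ^ 2 =
      gte p.2.1 p.2.2 + 2 * Complex.I *
        (fe p.1 (p.2.2 + 2 * Complex.I * (p.1 0 * p.2.1 0)) 0 * fte p.2.1 p.2.2 0 +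
         fe p.1 (p.2.2 + 2 * Complex.I * (p.1 0 * p.2.1 0)) 1 * fte p.2.1 p.2.2 1)
    simp only [Matrix.cons_val_zero, Matrix.cons_val_one, Matrix.head_cons]
    ring

lemma lem6 : ¬ TransversallyNull ge gte := by
  rintro ⟨h, -⟩
  have ht : Filter.Tendsto (fun w : ℂ => (((0 : Fin 2 → ℂ), w) : (Fin 2 → ℂ) × ℂ))
      (nhdsWithin 0 {0}ᶜ) (nhds 0) :=
    ((Continuous.prodMk continuous_const continuous_id).tendsto' 0 0 rfl).mono_left
      nhdsWithin_le_nhds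
  have h2 : ∀ᶠ w : ℂ in nhdsWithin 0 {0}ᶜ, w ^ 2 = 0 := ht.eventually h
  obtain ⟨w, hw2, hw⟩ := (h2.and eventually_mem_nhdsWithin).exists
  exact hw (by simpa using pow_eq_zero_iff (n := 2) (by norm_num) |>.mp hw2)

lemma lem7 : ∀ (w : ℂ) (z : Fin 2 → ℂ),
    (Matrix.of fun i j : Fin 2 => pd j (fun z' => fe z' w i) z).det = 0 := by
  intro w z
  apply Matrix.det_eq_zero_of_column_eq_zero 1
  intro i
  fin_cases i
  · show pd 1 (fun z' => (![z' 0 ^ 2, 2 * z' 0] : Fin 2 → ℂ) 0) z = 0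
    simp only [Matrix.cons_val_zero]
    exact pd1_key (fun t => t ^ 2) (by fun_prop) z
  · show pd 1 (fun z' => (![z' 0 ^ 2, 2 * z' 0] : Fin 2 → ℂ) 1) z = 0
    simp only [Matrix.cons_val_one, Matrix.head_cons]
    exact pd1_key (fun t => 2 * t) (by fun_prop) z

lemma lem8 : ∀ (τ : ℂ) (χ : Fin 2 → ℂ),
    (Matrix.of fun i j : Fin 2 => pd j (fun χ' => fte χ' τ i) χ).det = 0 := by
  intro τ χ
  apply Matrix.det_eq_zero_of_column_eq_zero 1
  intro i
  fin_cases i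
  · show pd 1 (fun χ' => (![2 * Complex.I * χ' 0 ^ 2, χ' 0 * τ] : Fin 2 → ℂ) 0) χ = 0
    simp only [Matrix.cons_val_zero]
    exact pd1_key (fun t => 2 * Complex.I * t ^ 2) (by fun_prop) χ
  · show pd 1 (fun χ' => (![2 * Complex.I * χ' 0 ^ 2, χ' 0 * τ] : Fin 2 → ℂ) 1) χ = 0
    simp only [Matrix.cons_val_one, Matrix.head_cons]
    exact pd1_key (fun t => t * τ) (by fun_prop) χ

lemma lem9 : ∀ p : (Fin 2 → ℂ) × ℂ, (jacFull fe ge p).det = 0 := by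
  intro p
  apply Matrix.det_eq_zero_of_column_eq_zero 1
  intro i
  show fderiv ℂ (fun q : (Fin 2 → ℂ) × ℂ =>
      (Fin.snoc (fe q.1 q.2) (ge q.1 q.2) : Fin 3 → ℂ) i) p (dirCT 2 1) = 0
  rw [dirCT21]
  fin_cases i
  · show fderiv ℂ (fun q : (Fin 2 → ℂ) × ℂ => q.1 0 ^ 2) p ((Pi.single 1 1 : Fin 2 → ℂ), 0) = 0
    exact key2 (fun xy => xy.1 ^ 2) (by fun_prop) p
  · show fderiv ℂ (fun q : (Fin 2 → ℂ) × ℂ => 2 * q.1 0) p ((Pi.single 1 1 : Fin 2 → ℂ), 0) = 0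
    exact key2 (fun xy => 2 * xy.1) (by fun_prop) p
  · show fderiv ℂ (fun q : (Fin 2 → ℂ) × ℂ => q.2 ^ 2) p ((Pi.single 1 1 : Fin 2 → ℂ), 0) = 0
    exact key2 (fun xy => xy.2 ^ 2) (by fun_prop) p

lemma lem10 : ∀ p : (Fin 2 → ℂ) × ℂ, (jacFull fte gte p).det = 0 := by
  intro p
  apply Matrix.det_eq_zero_of_column_eq_zero 1
  intro i
  show fderiv ℂ (fun q : (Fin 2 → ℂ) × ℂ =>
      (Fin.snoc (fte q.1 q.2) (gte q.1 q.2) : Fin 3 → ℂ) i) p (dirCT 2 1) = 0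
  rw [dirCT21]
  fin_cases i
  · show fderiv ℂ (fun q : (Fin 2 → ℂ) × ℂ => 2 * Complex.I * q.1 0 ^ 2) p ((Pi.single 1 1 : Fin 2 → ℂ), 0) = 0
    exact key2 (fun xy => 2 * Complex.I * xy.1 ^ 2) (by fun_prop) p
  · show fderiv ℂ (fun q : (Fin 2 → ℂ) × ℂ => q.1 0 * q.2) p ((Pi.single 1 1 : Fin 2 → ℂ), 0) = 0
    exact key2 (fun xy => xy.1 * xy.2) (by fun_prop) p
  · show fderiv ℂ (fun q : (Fin 2 → ℂ) × ℂ => q.2 ^ 2) p ((Pi.single 1 1 : Fin 2 → ℂ), 0) = 0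
    exact key2 (fun xy => xy.2 ^ 2) (by fun_prop) p

lemma lem11 : deriv (fun w : ℂ => ge 0 w) 0 = 0 := by
  show deriv (fun w : ℂ => w ^ 2) 0 = 0
  simp

end Main

/-- Example 3.3: an explicit HSPM between the complexifications of
`Im w = |z₁|²` (holomorphically degenerate) and `Im w' = |z₁'|² + |z₂'|²` (finitely
nondegenerate) which is not transversally null, yet all relevant Jacobian determinants vanish
identically and `∂g/∂w(0,0) = 0`. -/
theorem statement14 :
    let Q : (Fin 2 → ℂ) → (Fin 2 → ℂ) → ℂ → ℂ :=
      fun z χ τ => τ + 2 * Complex.I * (z 0 * χ 0)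
    let Q' : (Fin 2 → ℂ) → (Fin 2 → ℂ) → ℂ → ℂ :=
      fun z χ τ => τ + 2 * Complex.I * (z 0 * χ 0 + z 1 * χ 1)
    let f : (Fin 2 → ℂ) → ℂ → Fin 2 → ℂ := fun z _ => ![z 0 ^ 2, 2 * z 0]
    let g : (Fin 2 → ℂ) → ℂ → ℂ := fun _ w => w ^ 2
    let ft : (Fin 2 → ℂ) → ℂ → Fin 2 → ℂ := fun χ τ => ![2 * Complex.I * χ 0 ^ 2, χ 0 * τ]
    let gt : (Fin 2 → ℂ) → ℂ → ℂ := fun _ τ => τ ^ 2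
    IsRealNormalDF Q ∧ IsRealNormalDF Q' ∧
    ¬ HolNondeg Q ∧ FinNondeg Q' ∧
    IsHSPM Q Q' f g ft gt ∧
    ¬ TransversallyNull g gt ∧
    (∀ (w : ℂ) (z : Fin 2 → ℂ),
      (Matrix.of fun i j : Fin 2 => pd j (fun z' => f z' w i) z).det = 0) ∧
    (∀ (τ : ℂ) (χ : Fin 2 → ℂ),
      (Matrix.of fun i j : Fin 2 => pd j (fun χ' => ft χ' τ i) χ).det = 0) ∧
    (∀ p : (Fin 2 → ℂ) × ℂ, (jacFull f g p).det = 0) ∧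
    (∀ p : (Fin 2 → ℂ) × ℂ, (jacFull ft gt p).det = 0) ∧
    deriv (fun w => g 0 w) 0 = 0 := by
  exact ⟨lem1, lem2, lem3, lem4, lem5, lem6, lem7, lem8, lem9, lem10, lem11⟩

end HSPMpaper
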